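/- Assume the standing hypotheses and additionally c = a + 1. Then every element of S has a unique factorization length: if (p,q,r) and (p',q',r') ∈ ℕ₀³ satisfy p·u + q·v + r·w = p'·u + q'·v + r'·w, then p+q+r = p'+q'+r'. In particular ρ(s) = 1 for every nonzero s ∈ S, so the elasticity of the monoid S is ρ(S) = 1. -/
import Mathlib


/-- Standing hypotheses with c = a + 1: every element of S = ⟨(0,1),(a,b),(c,d)⟩
has a unique factorization length, so ρ(s) = 1 for all nonzero s ∈ S and
the elasticity of the monoid is ρ(S) = 1. -/
theorem embdim3_half_factorial (a b c d : ℕ) (ha : 0 < a) (hb : 0 < b) (hc : 0 < c)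
    (hstar : b * c = a * d + 1) (hca : c = a + 1) :
    ∀ p q r p' q' r' : ℕ,
      p • ((0 : ℕ), (1 : ℕ)) + q • ((a, b) : ℕ × ℕ) + r • ((c, d) : ℕ × ℕ) =
          p' • ((0 : ℕ), (1 : ℕ)) + q' • ((a, b) : ℕ × ℕ) + r' • ((c, d) : ℕ × ℕ) →
        p + q + r = p' + q' + r' := by
  subst hca
  intro p q r p' q' r' h
  rw [Prod.ext_iff] at h
  simp only [Prod.smul_fst, Prod.smul_snd, Prod.fst_add, Prod.snd_add, smul_eq_mul] at h
  obtain ⟨h1, h2⟩ := h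
  have h1' : (q : ℤ) * a + r * (a + 1) = q' * a + r' * (a + 1) := by have := h1; push_cast at this ⊢; linarith
  have h2' : (p : ℤ) + q * b + r * d = p' + q' * b + r' * d := by
    have := h2; push_cast at this ⊢; linarith
  have hs : (b : ℤ) * (a + 1) = a * d + 1 := by exact_mod_cast hstar
  have ha' : (a : ℤ) ≠ 0 := by exact_mod_cast ha.ne'
  have key : (a : ℤ) * (p + q + r) = a * (p' + q' + r') := by
    linear_combination (a : ℤ) * h2' + (1 - (b : ℤ)) * h1' + ((r : ℤ) - r') * hs
  have : ((p : ℤ) + q + r) = p' + q' + r' := mul_left_cancel₀ ha' key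
  exact_mod_cast this
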